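/- Let f : V₁ → V₂ be a linear map between finite-dimensional real vector spaces and L a vector Dirac structure on V₂. Then f_*(f*L) = L if and only if the image of f contains pr₁(L) ⊆ V₂. -/

import Mathlib

open Module LinearMap

/-- The canonical pairing on `V × V*`. -/
noncomputable def diracForm (V : Type*) [AddCommGroup V] [Module ℝ V] :
    LinearMap.BilinForm ℝ (V × Module.Dual ℝ V) :=
  LinearMap.mk₂ ℝ (fun z w => z.2 w.1 + w.2 z.1)
    (by intros; simp; ring) (by intros; simp; ring)
    (by intros; simp; ring) (by intros; simp; ring)

lemma diracForm_apply {V : Type*} [AddCommGroup V] [Module ℝ V]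
    (z w : V × Module.Dual ℝ V) : diracForm V z w = z.2 w.1 + w.2 z.1 := rfl

lemma diracForm_refl {V : Type*} [AddCommGroup V] [Module ℝ V] :
    (diracForm V).IsRefl := by
  intro z w h
  simp only [diracForm_apply] at *
  linarith

lemma diracForm_nondeg {V : Type*} [AddCommGroup V] [Module ℝ V] :
    (diracForm V).Nondegenerate := by
  refine (LinearMap.IsRefl.nondegenerate_iff_separatingLeft (B := diracForm V) diracForm_refl).mpr ?_
  intro z h
  have h1 : z.2 = 0 := by
    ext v
    simpa [diracForm_apply] using h (v, 0)
  have h2 : z.1 = 0 := by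
    rw [← Module.forall_dual_apply_eq_zero_iff ℝ]
    intro β
    simpa [diracForm_apply, h1] using h (0, β)
  exact Prod.ext h2 h1

lemma lagrangian_of_isotropic {V : Type*} [AddCommGroup V] [Module ℝ V]
    [FiniteDimensional ℝ V] (L : Submodule ℝ (V × Module.Dual ℝ V))
    (hiso : ∀ z ∈ L, ∀ w ∈ L, z.2 w.1 + w.2 z.1 = 0)
    (hdim : Module.finrank ℝ L = Module.finrank ℝ V) :
    (diracForm V).orthogonal L = L := by
  have hle : L ≤ (diracForm V).orthogonal L := by
    intro z hz
    rw [LinearMap.BilinForm.mem_orthogonal_iff]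
    intro w hw
    exact hiso w hw z hz
  refine (Submodule.eq_of_le_of_finrank_le hle ?_).symm
  have hV : Module.finrank ℝ (V × Module.Dual ℝ V) = 2 * Module.finrank ℝ V := by
    rw [Module.finrank_prod, Subspace.dual_finrank_eq]; ring
  rw [LinearMap.BilinForm.finrank_orthogonal diracForm_nondeg, hV, hdim]
  omega

/-- For a linear map `f : V₁ → V₂` and a vector Dirac structure `L` on `V₂`:
`f₊(f*L) = L` iff the image of `f` contains `pr₁(L)`. -/
theorem stmt_11 (V₁ V₂ : Type*) [AddCommGroup V₁] [Module ℝ V₁] [FiniteDimensional ℝ V₁]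
    [AddCommGroup V₂] [Module ℝ V₂] [FiniteDimensional ℝ V₂] (f : V₁ →ₗ[ℝ] V₂)
    (L : Submodule ℝ (V₂ × Module.Dual ℝ V₂))
    (hiso : ∀ z ∈ L, ∀ w ∈ L, z.2 w.1 + w.2 z.1 = 0)
    (hdim : Module.finrank ℝ L = Module.finrank ℝ V₂) :
    {q : V₂ × Module.Dual ℝ V₂ | ∃ X : V₁, q.1 = f X ∧
        (X, q.2 ∘ₗ f) ∈ {p : V₁ × Module.Dual ℝ V₁ | ∃ β : Module.Dual ℝ V₂,
          p.2 = β ∘ₗ f ∧ (f p.1, β) ∈ L}}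
      = (L : Set (V₂ × Module.Dual ℝ V₂)) ↔
    Submodule.map (LinearMap.fst ℝ V₂ (Module.Dual ℝ V₂)) L ≤ LinearMap.range f := by
  constructor
  · intro h v hv
    obtain ⟨⟨w, α⟩, hwL, rfl⟩ := Submodule.mem_map.mp hv
    have : ((w, α) : V₂ × Module.Dual ℝ V₂) ∈
        {q : V₂ × Module.Dual ℝ V₂ | ∃ X : V₁, q.1 = f X ∧
          (X, q.2 ∘ₗ f) ∈ {p : V₁ × Module.Dual ℝ V₁ | ∃ β : Module.Dual ℝ V₂,
            p.2 = β ∘ₗ f ∧ (f p.1, β) ∈ L}} := by rw [h]; exact hwL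
    obtain ⟨X, hX, _⟩ := this
    exact ⟨X, hX.symm⟩
  · intro hr
    ext ⟨v, α⟩
    constructor
    · rintro ⟨X, hX, β, hβ, hβL⟩
      simp only [SetLike.mem_coe]
      -- (v, α) = (f X, β) + (0, α - β), and (0, α - β) ∈ L since α - β vanishes on pr₁ L
      have hker : (((0 : V₂), α - β) : V₂ × Module.Dual ℝ V₂) ∈ L := by
        rw [← lagrangian_of_isotropic L hiso hdim, LinearMap.BilinForm.mem_orthogonal_iff]
        rintro ⟨w, γ⟩ hw
        obtain ⟨Y, hY⟩ := hr (Submodule.mem_map.mpr ⟨(w, γ), hw, rfl⟩)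
        simp only [LinearMap.BilinForm.IsOrtho, diracForm_apply]
        have : (α - β) w = 0 := by
          have := congrFun (congrArg DFunLike.coe hβ) Y
          simp only [LinearMap.coe_comp, Function.comp_apply] at this
          have hY' : f Y = w := hY
          simp only [LinearMap.sub_apply, ← hY', this, sub_self]
        simp [this]
      have h2 : ((f X, α) : V₂ × Module.Dual ℝ V₂) ∈ L := by
        simpa using L.add_mem hβL hker
      have hX' : v = f X := hX
      rw [hX']; exact h2
    · intro hvL
      obtain ⟨X, hX⟩ := hr (Submodule.mem_map.mpr ⟨(v, α), hvL, rfl⟩)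
      exact ⟨X, hX.symm, α, rfl, by simpa [hX] using hvL⟩
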